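/- For every θ ∈ [0, π], (1/(2π)) ∫_{−π/2}^{π/2} [∫₀^{2π} ∫₀^1 r³ · 1_{−sin(θ+ρ) ≤ r sin(θ−β) ≤ sin(θ−ρ)} dr dβ] cos ρ dρ = (56 sin θ)/(45π). -/

import Mathlib

open Real intervalIntegral

open MeasureTheory Set in
private lemma II_of_bdd' {f : ℝ → ℝ} (M : ℝ) (hf : Measurable f) {a b : ℝ}
    (hM : ∀ x ∈ Set.uIoc a b, |f x| ≤ M) : IntervalIntegrable f volume a b := by
  rw [intervalIntegrable_iff]
  have h : IntegrableOn (fun _ : ℝ => M) (Set.uIoc a b) volume :=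
    integrableOn_const measure_Ioc_lt_top.ne
  apply h.mono' hf.aestronglyMeasurable.restrict
  rw [MeasureTheory.ae_restrict_iff' measurableSet_uIoc]
  exact Filter.Eventually.of_forall hM

open MeasureTheory Set in
private lemma II_of_bdd {f : ℝ → ℝ} (M : ℝ) (hf : Measurable f) (hM : ∀ x, |f x| ≤ M)
    (a b : ℝ) : IntervalIntegrable f volume a b :=
  II_of_bdd' M hf (fun x _ => hM x)

open MeasureTheory Set in
private lemma meas_ind (c d : ℝ) : Measurable (fun x => if c ≤ x ∧ x ≤ d then (1:ℝ) else 0) := by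
  have : MeasurableSet {x : ℝ | c ≤ x ∧ x ≤ d} := by
    simpa [Set.Icc, setOf_and] using (measurableSet_Icc : MeasurableSet (Icc c d))
  exact Measurable.ite this measurable_const measurable_const

open MeasureTheory Set in
private lemma bd_ind (c d : ℝ) : ∀ x : ℝ, |if c ≤ x ∧ x ≤ d then (1:ℝ) else 0| ≤ 1 := by
  intro x; split <;> simp

open MeasureTheory Set in
private lemma indicator_int (c d l u : ℝ) (hl : l ≤ c) (hcd : c ≤ d) (hu : d ≤ u) :
    ∫ x in l..u, (if c ≤ x ∧ x ≤ d then (1:ℝ) else 0) = d - c := by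
  have hint : ∀ a b : ℝ, IntervalIntegrable (fun x => if c ≤ x ∧ x ≤ d then (1:ℝ) else 0) volume a b :=
    fun a b => II_of_bdd 1 (meas_ind c d) (bd_ind c d) a b
  have h1 : ∫ x in l..c, (if c ≤ x ∧ x ≤ d then (1:ℝ) else 0) = 0 := by
    have hae : ∀ᵐ x : ℝ ∂volume, x ∈ Set.uIoc l c → (if c ≤ x ∧ x ≤ d then (1:ℝ) else 0) = 0 := by
      have hne : ∀ᵐ x : ℝ ∂volume, x ≠ c := by
        rw [MeasureTheory.ae_iff]
        simpa using (Real.volume_singleton (a := c))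
      filter_upwards [hne] with x hx hmem
      rw [Set.mem_uIoc] at hmem
      have hxc : x ≤ c := by
        rcases hmem with h | h
        · exact h.2
        · exact h.2.trans hl
      have : ¬ (c ≤ x ∧ x ≤ d) := fun ⟨h1, _⟩ => hx (le_antisymm hxc h1)
      simp [this]
    rw [intervalIntegral.integral_congr_ae hae]; simp
  have h2 : ∫ x in c..d, (if c ≤ x ∧ x ≤ d then (1:ℝ) else 0) = d - c := by
    have : EqOn (fun x => if c ≤ x ∧ x ≤ d then (1:ℝ) else 0) (fun _ => (1:ℝ)) (uIcc c d) := by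
      intro x hx
      rw [Set.uIcc_of_le hcd] at hx
      simp [hx.1, hx.2]
    rw [intervalIntegral.integral_congr this]; simp
  have h3 : ∫ x in d..u, (if c ≤ x ∧ x ≤ d then (1:ℝ) else 0) = 0 := by
    have hae : ∀ᵐ x : ℝ ∂volume, x ∈ Set.uIoc d u → (if c ≤ x ∧ x ≤ d then (1:ℝ) else 0) = 0 := by
      apply Filter.Eventually.of_forall
      intro x hmem
      rw [Set.mem_uIoc] at hmem
      have hdx : d < x := by
        rcases hmem with h | h
        · exact h.1
        · exact lt_of_le_of_lt hu h.1
      have : ¬ (c ≤ x ∧ x ≤ d) := fun h => absurd h.2 (not_le.2 hdx)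
      simp [this]
    rw [intervalIntegral.integral_congr_ae hae]; simp
  rw [← intervalIntegral.integral_add_adjacent_intervals (hint l c) (hint c u),
    ← intervalIntegral.integral_add_adjacent_intervals (hint c d) (hint d u), h1, h2, h3]
  ring

open MeasureTheory Set in
private lemma circ (θ a b : ℝ) (hab : -b ≤ a) :
    (∫ β in (0:ℝ)..(2*π), (if -b ≤ Real.sin (θ - β) ∧ Real.sin (θ - β) ≤ a then (1:ℝ) else 0))
      = 2*(arcsin a + arcsin b) := by
  set F : ℝ → ℝ := fun x => if -b ≤ Real.sin x ∧ Real.sin x ≤ a then (1:ℝ) else 0 with hF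
  have hFmeas : Measurable F := by
    have : MeasurableSet {x : ℝ | -b ≤ Real.sin x ∧ Real.sin x ≤ a} := by
      apply MeasurableSet.inter
      · exact measurableSet_le measurable_const Real.continuous_sin.measurable
      · exact measurableSet_le Real.continuous_sin.measurable measurable_const
    exact Measurable.ite this measurable_const measurable_const
  have hFbd : ∀ x, |F x| ≤ 1 := by intro x; rw [hF]; dsimp only; split <;> simp
  have hFint : ∀ s t : ℝ, IntervalIntegrable F volume s t := fun s t => II_of_bdd 1 hFmeas hFbd s t
  have hper : Function.Periodic F (2*π) := by
    intro x; simp only [hF, Real.sin_add_two_pi]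
  have h1 : (∫ β in (0:ℝ)..(2*π), F (θ - β)) = ∫ x in (θ - 2*π)..(θ - 0), F x :=
    intervalIntegral.integral_comp_sub_left F θ
  have h2 : (∫ x in (θ - 2*π)..(θ - 2*π + 2*π), F x) = ∫ x in (-(π/2))..(-(π/2) + 2*π), F x :=
    hper.intervalIntegral_add_eq (θ - 2*π) (-(π/2))
  have h2' : (∫ x in (θ - 2*π)..(θ - 0), F x) = ∫ x in (-(π/2))..(-(π/2) + 2*π), F x := by
    rw [← h2]; congr 1; ring
  have h3 : (∫ x in (-(π/2))..(π/2), F x) + (∫ x in (π/2)..(-(π/2) + 2*π), F x)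
      = ∫ x in (-(π/2))..(-(π/2) + 2*π), F x :=
    intervalIntegral.integral_add_adjacent_intervals (hFint _ _) (hFint _ _)
  have h4 : (∫ x in (π/2)..(-(π/2) + 2*π), F x) = ∫ x in (-(π/2))..(π/2), F x := by
    have h : (∫ x in (-(π/2))..(π/2), F (π - x)) = ∫ x in (π - π/2)..(π - -(π/2)), F x :=
      intervalIntegral.integral_comp_sub_left F π
    have e1 : π - π/2 = π/2 := by ring
    have e2 : π - -(π/2) = -(π/2) + 2*π := by ring
    rw [e1, e2] at h
    rw [← h]
    apply intervalIntegral.integral_congr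
    intro x _
    simp only [hF, Real.sin_pi_sub]
  have h5 : (∫ x in (-(π/2))..(π/2), F x) = arcsin a + arcsin b := by
    have hae : ∀ᵐ x : ℝ ∂volume, x ∈ Set.uIoc (-(π/2)) (π/2) →
        F x = (if -arcsin b ≤ x ∧ x ≤ arcsin a then (1:ℝ) else 0) := by
      have hne : ∀ᵐ x : ℝ ∂volume, x ≠ π/2 := by
        rw [MeasureTheory.ae_iff]; simpa using (Real.volume_singleton (a := π/2))
      filter_upwards [hne] with x hx hmem
      rw [Set.mem_uIoc] at hmem
      have hmem' : -(π/2) < x ∧ x ≤ π/2 := by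
        rcases hmem with h | h
        · exact h
        · exfalso; have := h.1.trans_le h.2; linarith [Real.pi_pos]
      have hx2 : x < π/2 := lt_of_le_of_ne hmem'.2 hx
      have hiff1 : Real.sin x ≤ a ↔ x ≤ arcsin a :=
        (Real.le_arcsin_iff_sin_le' ⟨hmem'.1, hmem'.2⟩).symm
      have hiff2 : -b ≤ Real.sin x ↔ -arcsin b ≤ x := by
        rw [← Real.arcsin_neg]
        exact (Real.arcsin_le_iff_le_sin' ⟨hmem'.1.le, hx2⟩).symm
      rw [hF]; dsimp only
      rw [if_congr (and_congr hiff2 hiff1) rfl rfl]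
    rw [intervalIntegral.integral_congr_ae hae]
    have hc1 : -(π/2) ≤ -arcsin b := neg_le_neg (Real.arcsin_le_pi_div_two b)
    have hc2 : -arcsin b ≤ arcsin a := by
      calc -arcsin b = arcsin (-b) := (Real.arcsin_neg b).symm
        _ ≤ arcsin a := Real.monotone_arcsin hab
    have hc3 : arcsin a ≤ π/2 := Real.arcsin_le_pi_div_two a
    rw [indicator_int _ _ _ _ hc1 hc2 hc3]
    ring
  calc (∫ β in (0:ℝ)..(2*π), F (θ - β)) = ∫ x in (θ - 2*π)..(θ - 0), F x := h1
    _ = ∫ x in (-(π/2))..(-(π/2) + 2*π), F x := h2'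
    _ = (∫ x in (-(π/2))..(π/2), F x) + (∫ x in (π/2)..(-(π/2) + 2*π), F x) := h3.symm
    _ = 2*(arcsin a + arcsin b) := by rw [h4, h5]; ring

open MeasureTheory Set in
private lemma meas_f (c : ℝ) : Measurable (fun r : ℝ => r^3 * arcsin (c/r)) := by
  apply Measurable.mul (by measurability)
  exact Real.continuous_arcsin.measurable.comp (measurable_const.div measurable_id)

open MeasureTheory Set in
private lemma f_int (c a b : ℝ) (ha : |a| ≤ 1) (hb : |b| ≤ 1) :
    IntervalIntegrable (fun r : ℝ => r^3 * arcsin (c/r)) volume a b := by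
  apply II_of_bdd' (π/2) (meas_f c)
  intro x hx
  have hx1 : |x| ≤ 1 := by
    rcases Set.mem_uIoc.1 hx with h | h
    · rw [abs_le] at ha hb ⊢; constructor <;> nlinarith [h.1, h.2]
    · rw [abs_le] at ha hb ⊢; constructor <;> nlinarith [h.1, h.2]
  have h1 : |x^3| ≤ 1 := by
    rw [abs_pow]; exact pow_le_one₀ (abs_nonneg x) hx1
  have h2 : |arcsin (c/x)| ≤ π/2 := by
    rw [abs_le]
    exact ⟨Real.neg_pi_div_two_le_arcsin _, Real.arcsin_le_pi_div_two _⟩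
  calc |x^3 * arcsin (c/x)| = |x^3| * |arcsin (c/x)| := abs_mul _ _
    _ ≤ 1 * (π/2) := by
        apply mul_le_mul h1 h2 (abs_nonneg _) zero_le_one
    _ = π/2 := one_mul _

open MeasureTheory Set in
private lemma rint_pos (c : ℝ) (h0 : 0 < c) (hc : c ≤ 1) :
    ∫ r in (0:ℝ)..1, r^3 * arcsin (c/r)
      = arcsin c/4 + c*(1-c^2)*Real.sqrt (1-c^2)/12 + c^3*Real.sqrt (1-c^2)/4 := by
  have habs : |c| ≤ 1 := by rw [abs_le]; constructor <;> linarith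
  have h1 : ∫ r in (0:ℝ)..c, r^3 * arcsin (c/r) = π * c^4 / 8 := by
    have he : EqOn (fun r : ℝ => r^3 * arcsin (c/r)) (fun r => r^3 * (π/2)) (uIcc 0 c) := by
      intro r hr
      rw [Set.uIcc_of_le h0.le] at hr
      rcases eq_or_lt_of_le hr.1 with rfl | hrpos
      · simp
      · have : (1:ℝ) ≤ c / r := (le_div_iff₀ hrpos).2 (by linarith [hr.2])
        simp [Real.arcsin_of_one_le this]
    rw [intervalIntegral.integral_congr he]
    rw [intervalIntegral.integral_mul_const, integral_pow]
    ring
  set Φ : ℝ → ℝ := fun r => r^4/4 * arcsin (c/r)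
      + (c/12 * ((r^2-c^2) * Real.sqrt (r^2-c^2)) + c^3/4 * Real.sqrt (r^2-c^2)) with hΦ
  have hcont : ContinuousOn Φ (Icc c 1) := by
    apply ContinuousOn.add
    · apply ContinuousOn.mul (by fun_prop)
      apply Real.continuous_arcsin.comp_continuousOn
      apply ContinuousOn.div continuousOn_const continuousOn_id
      intro x hx; exact ne_of_gt (lt_of_lt_of_le h0 hx.1)
    · fun_prop
  have hderiv : ∀ x ∈ Ioo c 1, HasDerivAt Φ (x^3 * arcsin (c/x)) x := by
    intro x hx
    have hx0 : (0:ℝ) < x := h0.trans hx.1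
    have hxc : c < x := hx.1
    have hs2pos : 0 < x^2 - c^2 := by nlinarith
    set s := Real.sqrt (x^2 - c^2) with hsdef
    have hs : s^2 = x^2 - c^2 := Real.sq_sqrt hs2pos.le
    have hspos : 0 < s := Real.sqrt_pos.2 hs2pos
    have hd1 : HasDerivAt (fun r : ℝ => c / r) (c * -(x^2)⁻¹) x := by
      simpa [div_eq_mul_inv] using (hasDerivAt_inv hx0.ne').const_mul c
    have hne1 : c / x ≠ -1 := by
      have : 0 < c / x := div_pos h0 hx0
      linarith
    have hne2 : c / x ≠ 1 := by
      have : c / x < 1 := (div_lt_one hx0).2 hxc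
      linarith
    have hd2 : HasDerivAt (fun r : ℝ => arcsin (c/r))
        (1 / Real.sqrt (1 - (c/x)^2) * (c * -(x^2)⁻¹)) x :=
      (Real.hasDerivAt_arcsin hne1 hne2).comp x hd1
    have hd3 : HasDerivAt (fun r : ℝ => r^4/4) ((4:ℕ) * x^3 / 4) x := by
      simpa using (hasDerivAt_pow 4 x).div_const 4
    have hd4 : HasDerivAt (fun r : ℝ => r^2 - c^2) ((2:ℕ) * x^1) x :=
      (hasDerivAt_pow 2 x).sub_const _
    have hd5 : HasDerivAt (fun r : ℝ => Real.sqrt (r^2 - c^2))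
        (1 / (2 * s) * ((2:ℕ) * x^1)) x := by
      exact (Real.hasDerivAt_sqrt hs2pos.ne').comp x hd4
    have hd6 : HasDerivAt (fun r : ℝ => (r^2-c^2) * Real.sqrt (r^2-c^2))
        (((2:ℕ) * x^1) * s + (x^2-c^2) * (1 / (2 * s) * ((2:ℕ) * x^1))) x := hd4.mul hd5
    have hdall := (hd3.mul hd2).add ((hd6.const_mul (c/12)).add (hd5.const_mul (c^3/4)))
    have hq : Real.sqrt (1 - (c/x)^2) = s / x := by
      rw [show (1 - (c/x)^2) = (x^2 - c^2) / x^2 by field_simp]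
      rw [show (x^2 - c^2) / x^2 = (s/x)^2 by rw [div_pow, hs]]
      exact Real.sqrt_sq (by positivity)
    refine hdall.congr_deriv ?_; symm
    rw [hq, ← hs]
    field_simp
    linear_combination (-24 * c) * hs
  have h2 : ∫ r in c..1, r^3 * arcsin (c/r) = Φ 1 - Φ c :=
    intervalIntegral.integral_eq_sub_of_hasDerivAt_of_le hc hcont hderiv
      (f_int c c 1 habs (by norm_num))
  have hΦ1 : Φ 1 = arcsin c/4 + (c/12 * ((1-c^2) * Real.sqrt (1-c^2)) + c^3/4 * Real.sqrt (1-c^2)) := by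
    rw [hΦ]; norm_num; ring
  have hΦc : Φ c = c^4/4 * (π/2) := by
    rw [hΦ]; simp [div_self h0.ne', Real.arcsin_one]
  have hsplit := intervalIntegral.integral_add_adjacent_intervals
    (f_int c 0 c (by norm_num) habs) (f_int c c 1 habs (by norm_num))
  rw [← hsplit, h1, h2, hΦ1, hΦc]
  ring

open MeasureTheory Set in
private lemma rint (c : ℝ) (hc1 : -1 ≤ c) (hc2 : c ≤ 1) :
    ∫ r in (0:ℝ)..1, r^3 * arcsin (c/r)
      = arcsin c/4 + c*(1-c^2)*Real.sqrt (1-c^2)/12 + c^3*Real.sqrt (1-c^2)/4 := by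
  rcases lt_trichotomy c 0 with hneg | rfl | hpos
  · have h := rint_pos (-c) (by linarith) (by linarith)
    have he : (fun r : ℝ => r^3 * arcsin (c/r)) = fun r => -(r^3 * arcsin (-c/r)) := by
      funext r
      rw [show -c/r = -(c/r) by ring, Real.arcsin_neg]
      ring
    rw [he, intervalIntegral.integral_neg, h, Real.arcsin_neg,
      show (1 - (-c)^2) = 1 - c^2 by ring]
    ring
  · norm_num
  · exact rint_pos c hpos hc2

noncomputable def GGaux (c : ℝ) : ℝ :=
  arcsin c/2 + c*(1-c^2)*Real.sqrt (1-c^2)/6 + c^3*Real.sqrt (1-c^2)/2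

open MeasureTheory Set in
private lemma double_eval (θ A B : ℝ) (hA1 : -1 ≤ A) (hA2 : A ≤ 1) (hB1 : -1 ≤ B) (hB2 : B ≤ 1)
    (hAB : -B ≤ A) :
    (∫ β in (0:ℝ)..(2*π), ∫ r in (0:ℝ)..1,
        r^3 * (if -B ≤ r * Real.sin (θ - β) ∧ r * Real.sin (θ - β) ≤ A then (1:ℝ) else 0))
      = GGaux A + GGaux B := by
  have pi2 : (0:ℝ) ≤ 2*π := by positivity
  set F : ℝ → ℝ → ℝ := fun β r =>
    r^3 * (if -B ≤ r * Real.sin (θ - β) ∧ r * Real.sin (θ - β) ≤ A then (1:ℝ) else 0) with hFdef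
  have hmeas : Measurable (Function.uncurry F) := by
    apply Measurable.mul
    · exact (measurable_snd.pow_const 3)
    · have hcont : Continuous (fun p : ℝ × ℝ => p.2 * Real.sin (θ - p.1)) := by fun_prop
      have hset : MeasurableSet {p : ℝ × ℝ |
          -B ≤ p.2 * Real.sin (θ - p.1) ∧ p.2 * Real.sin (θ - p.1) ≤ A} := by
        have : {p : ℝ × ℝ | -B ≤ p.2 * Real.sin (θ - p.1) ∧ p.2 * Real.sin (θ - p.1) ≤ A}
            = (fun p : ℝ × ℝ => p.2 * Real.sin (θ - p.1)) ⁻¹' (Icc (-B) A) := rfl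
        rw [this]
        exact hcont.measurable measurableSet_Icc
      exact Measurable.ite hset measurable_const measurable_const
  haveI hf1 : IsFiniteMeasure (volume.restrict (Set.Ioc (0:ℝ) (2*π))) :=
    ⟨by rw [Measure.restrict_apply_univ]; exact measure_Ioc_lt_top⟩
  haveI hf2 : IsFiniteMeasure (volume.restrict (Set.Ioc (0:ℝ) 1)) :=
    ⟨by rw [Measure.restrict_apply_univ]; exact measure_Ioc_lt_top⟩
  have hint : Integrable (Function.uncurry F)
      ((volume.restrict (Set.Ioc (0:ℝ) (2*π))).prod (volume.restrict (Set.Ioc (0:ℝ) 1))) := by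
    apply (integrable_const (1:ℝ)).mono' hmeas.aestronglyMeasurable
    rw [Measure.prod_restrict]
    rw [MeasureTheory.ae_restrict_iff' (measurableSet_Ioc.prod measurableSet_Ioc)]
    apply Filter.Eventually.of_forall
    rintro ⟨β, r⟩ hp
    have hr : r ∈ Set.Ioc (0:ℝ) 1 := hp.2
    have h3 : |r^3| ≤ 1 := by
      rw [abs_pow]
      apply pow_le_one₀ (abs_nonneg r)
      rw [abs_le]; exact ⟨by linarith [hr.1], hr.2⟩
    simp only [Function.uncurry, hFdef, norm_mul, Real.norm_eq_abs]
    split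
    · simpa using h3
    · simp
  have hswap : (∫ β in (0:ℝ)..(2*π), ∫ r in (0:ℝ)..1, F β r)
      = ∫ r in (0:ℝ)..1, ∫ β in (0:ℝ)..(2*π), F β r := by
    rw [intervalIntegral.integral_of_le pi2, intervalIntegral.integral_of_le (zero_le_one)]
    simp_rw [intervalIntegral.integral_of_le pi2, intervalIntegral.integral_of_le (zero_le_one)]
    exact MeasureTheory.integral_integral_swap hint
  rw [hswap]
  have hcongr : EqOn (fun r => ∫ β in (0:ℝ)..(2*π), F β r)
      (fun r => 2 * (r^3 * arcsin (A/r) + r^3 * arcsin (B/r))) (uIcc 0 1) := by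
    intro r hr
    rw [Set.uIcc_of_le zero_le_one] at hr
    rcases eq_or_lt_of_le hr.1 with rfl | hrpos
    · simp [hFdef]
    · dsimp only
      have key1 : ∀ u v : ℝ, (u ≤ r * v ↔ u / r ≤ v) := fun u v => by
        rw [div_le_iff₀ hrpos, mul_comm]
      have key2 : ∀ u v : ℝ, (r * u ≤ v ↔ u ≤ v / r) := fun u v => by
        rw [le_div_iff₀ hrpos, mul_comm]
      have hpull : (∫ β in (0:ℝ)..(2*π), F β r)
          = r^3 * ∫ β in (0:ℝ)..(2*π),
              (if -(B/r) ≤ Real.sin (θ - β) ∧ Real.sin (θ - β) ≤ A/r then (1:ℝ) else 0) := by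
        rw [← intervalIntegral.integral_const_mul]
        apply intervalIntegral.integral_congr
        intro β _
        simp only [hFdef]
        congr 1
        apply if_congr _ rfl rfl
        apply and_congr
        · rw [← neg_div]
          exact key1 (-B) _
        · exact key2 _ A
      have hab' : -(B/r) ≤ A/r := by
        rw [← neg_div]
        gcongr
      rw [hpull, circ θ (A/r) (B/r) hab']
      ring
  rw [intervalIntegral.integral_congr hcongr, intervalIntegral.integral_const_mul,
    intervalIntegral.integral_add (f_int A 0 1 (by norm_num) (by norm_num))
      (f_int B 0 1 (by norm_num) (by norm_num)),
    rint A hA1 hA2, rint B hB1 hB2]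
  unfold GGaux
  ring

private lemma GG_cont : Continuous GGaux := by
  unfold GGaux
  have h1 : Continuous (fun c : ℝ => Real.sqrt (1 - c^2)) :=
    Real.continuous_sqrt.comp (by fun_prop)
  have := Real.continuous_arcsin
  fun_prop

private lemma Gsin1 (x : ℝ) (h1 : -(π/2) ≤ x) (h2 : x ≤ π/2) :
    GGaux (Real.sin x) = x/2 + Real.sin (2*x)/6 - Real.sin (4*x)/24 := by
  unfold GGaux
  have hcos : 0 ≤ Real.cos x := Real.cos_nonneg_of_mem_Icc ⟨h1, h2⟩
  have hsq : 1 - Real.sin x^2 = Real.cos x^2 := by rw [Real.cos_sq']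
  rw [Real.arcsin_sin h1 h2, hsq, Real.sqrt_sq hcos]
  rw [show (4:ℝ)*x = 2*(2*x) by ring, Real.sin_two_mul (2*x), Real.sin_two_mul x,
    Real.cos_two_mul x]
  linear_combination (Real.sin x * Real.cos x / 2) * (Real.sin_sq_add_cos_sq x)

private lemma Gsin2 (x : ℝ) (h1 : π/2 ≤ x) (h2 : x ≤ 3*π/2) :
    GGaux (Real.sin x) = π/2 - (x/2 + Real.sin (2*x)/6 - Real.sin (4*x)/24) := by
  unfold GGaux
  have hcos : Real.cos x ≤ 0 := by
    apply Real.cos_nonpos_of_pi_div_two_le_of_le h1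
    linarith [Real.pi_pos]
  have hsq : 1 - Real.sin x^2 = Real.cos x^2 := by rw [Real.cos_sq']
  have harc : arcsin (Real.sin x) = π - x := by
    rw [← Real.sin_pi_sub, Real.arcsin_sin (by linarith) (by linarith)]
  rw [harc, hsq, Real.sqrt_sq_eq_abs, abs_of_nonpos hcos]
  rw [show (4:ℝ)*x = 2*(2*x) by ring, Real.sin_two_mul (2*x), Real.sin_two_mul x,
    Real.cos_two_mul x]
  linear_combination (-(Real.sin x * Real.cos x / 2)) * (Real.sin_sq_add_cos_sq x)

noncomputable def H1aux (θ ρ : ℝ) : ℝ :=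
  (θ+ρ)*Real.sin ρ/2 + Real.cos ρ/2 - Real.cos (2*θ+3*ρ)/36 - Real.cos (2*θ+ρ)/12
    + Real.cos (4*θ+5*ρ)/240 + Real.cos (4*θ+3*ρ)/144

private lemma H1_deriv (θ ρ : ℝ) :
    HasDerivAt (H1aux θ) (((θ+ρ)/2 + Real.sin (2*(θ+ρ))/6 - Real.sin (4*(θ+ρ))/24) * Real.cos ρ) ρ := by
  have hid : HasDerivAt (fun ρ : ℝ => ρ) 1 ρ := hasDerivAt_id ρ
  have a1 : HasDerivAt (fun ρ : ℝ => 2*θ+3*ρ) 3 ρ := by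
    simpa using ((hid.const_mul (3:ℝ)).const_add (2*θ))
  have a2 : HasDerivAt (fun ρ : ℝ => 2*θ+ρ) 1 ρ := by
    simpa using (hid.const_add (2*θ))
  have a3 : HasDerivAt (fun ρ : ℝ => 4*θ+5*ρ) 5 ρ := by
    simpa using ((hid.const_mul (5:ℝ)).const_add (4*θ))
  have a4 : HasDerivAt (fun ρ : ℝ => 4*θ+3*ρ) 3 ρ := by
    simpa using ((hid.const_mul (3:ℝ)).const_add (4*θ))
  have c1 : HasDerivAt (fun ρ : ℝ => Real.cos (2*θ+3*ρ)) (-Real.sin (2*θ+3*ρ) * 3) ρ :=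
    a1.cos
  have c2 : HasDerivAt (fun ρ : ℝ => Real.cos (2*θ+ρ)) (-Real.sin (2*θ+ρ) * 1) ρ :=
    (Real.hasDerivAt_cos (2*θ+ρ)).comp ρ a2
  have c3 : HasDerivAt (fun ρ : ℝ => Real.cos (4*θ+5*ρ)) (-Real.sin (4*θ+5*ρ) * 5) ρ :=
    a3.cos
  have c4 : HasDerivAt (fun ρ : ℝ => Real.cos (4*θ+3*ρ)) (-Real.sin (4*θ+3*ρ) * 3) ρ :=
    a4.cos
  have t1 : HasDerivAt (fun ρ : ℝ => (θ+ρ)*Real.sin ρ)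
      (1 * Real.sin ρ + (θ+ρ) * Real.cos ρ) ρ := by
    exact (hid.const_add θ).mul (Real.hasDerivAt_sin ρ)
  have hh := (((((t1.div_const 2).add ((Real.hasDerivAt_cos ρ).div_const 2)).sub
      (c1.div_const 36)).sub (c2.div_const 12)).add (c3.div_const 240)).add (c4.div_const 144)
  refine hh.congr_deriv ?_; symm
  rw [show 2*θ+3*ρ = 2*(θ+ρ)+ρ by ring, show 2*θ+ρ = 2*(θ+ρ)-ρ by ring,
    show 4*θ+5*ρ = 4*(θ+ρ)+ρ by ring, show 4*θ+3*ρ = 4*(θ+ρ)-ρ by ring,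
    Real.sin_add, Real.sin_sub, Real.sin_add, Real.sin_sub]
  ring

private lemma H1_at_rho0 (θ : ℝ) : H1aux θ (π/2 - θ)
    = π * Real.cos θ/4 + Real.sin θ/2 + Real.sin θ/36 + Real.sin θ/12
      + Real.sin θ/240 + Real.sin θ/144 := by
  unfold H1aux
  rw [show θ + (π/2 - θ) = π/2 by ring, Real.sin_pi_div_two_sub, Real.cos_pi_div_two_sub,
    show 2*θ+3*(π/2 - θ) = (π/2 - θ) + π by ring, Real.cos_add_pi, Real.cos_pi_div_two_sub,
    show 2*θ+(π/2 - θ) = θ + π/2 by ring, Real.cos_add_pi_div_two,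
    show 4*θ+5*(π/2 - θ) = (π/2 - θ) + 2*π by ring, Real.cos_add_two_pi,
    Real.cos_pi_div_two_sub,
    show 4*θ+3*(π/2 - θ) = (θ + π/2) + π by ring, Real.cos_add_pi, Real.cos_add_pi_div_two]
  ring

private lemma H1_at_top (θ : ℝ) : H1aux θ (π/2)
    = (θ + π/2)/2 - Real.sin (2*θ)/36 + Real.sin (2*θ)/12 - Real.sin (4*θ)/240
      + Real.sin (4*θ)/144 := by
  unfold H1aux
  rw [Real.sin_pi_div_two, Real.cos_pi_div_two,
    show 2*θ+3*(π/2) = (2*θ + π/2) + π by ring, Real.cos_add_pi, Real.cos_add_pi_div_two,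
    show 4*θ+5*(π/2) = (4*θ + π/2) + 2*π by ring, Real.cos_add_two_pi, Real.cos_add_pi_div_two,
    show 4*θ+3*(π/2) = (4*θ + π/2) + π by ring, Real.cos_add_pi, Real.cos_add_pi_div_two]
  ring

private lemma H1_at_bot (θ : ℝ) : H1aux θ (-(π/2))
    = -(θ - π/2)/2 + Real.sin (2*θ)/36 - Real.sin (2*θ)/12 + Real.sin (4*θ)/240
      - Real.sin (4*θ)/144 := by
  unfold H1aux
  rw [show -(π/2) = (0:ℝ) - π/2 by ring, Real.sin_sub, Real.cos_sub,
    show 2*θ+3*((0:ℝ) - π/2) = (2*θ - π/2) - 2*π + π by ring, Real.cos_add_pi,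
    Real.cos_sub_two_pi, Real.cos_sub_pi_div_two,
    show 2*θ+((0:ℝ) - π/2) = 2*θ - π/2 by ring, Real.cos_sub_pi_div_two,
    show 4*θ+5*((0:ℝ) - π/2) = (4*θ - π/2) - 2*π by ring, Real.cos_sub_two_pi,
    Real.cos_sub_pi_div_two,
    show 4*θ+3*((0:ℝ) - π/2) = (4*θ - π/2) - 2*π + π by ring, Real.cos_add_pi,
    Real.cos_sub_two_pi, Real.cos_sub_pi_div_two]
  simp
  ring

open MeasureTheory Set in
private lemma outer_int (θ : ℝ) (h0 : 0 ≤ θ) (hπ : θ ≤ π) :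
    (∫ ρ in (-(π/2))..(π/2), (GGaux (Real.sin (θ-ρ)) + GGaux (Real.sin (θ+ρ))) * Real.cos ρ)
      = 112 * Real.sin θ / 45 := by
  have hpi := Real.pi_pos
  have hcont1 : Continuous (fun ρ : ℝ => GGaux (Real.sin (θ-ρ)) * Real.cos ρ) :=
    (GG_cont.comp (Real.continuous_sin.comp (continuous_const.sub continuous_id))).mul
      Real.continuous_cos
  have hcont2 : Continuous (fun ρ : ℝ => GGaux (Real.sin (θ+ρ)) * Real.cos ρ) :=
    (GG_cont.comp (Real.continuous_sin.comp (continuous_const.add continuous_id))).mul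
      Real.continuous_cos
  have hsplit : (∫ ρ in (-(π/2))..(π/2), (GGaux (Real.sin (θ-ρ)) + GGaux (Real.sin (θ+ρ))) * Real.cos ρ)
      = (∫ ρ in (-(π/2))..(π/2), GGaux (Real.sin (θ-ρ)) * Real.cos ρ)
        + ∫ ρ in (-(π/2))..(π/2), GGaux (Real.sin (θ+ρ)) * Real.cos ρ := by
    rw [← intervalIntegral.integral_add (hcont1.intervalIntegrable _ _)
      (hcont2.intervalIntegrable _ _)]
    apply intervalIntegral.integral_congr
    intro x _
    ring
  have hrefl : (∫ ρ in (-(π/2))..(π/2), GGaux (Real.sin (θ-ρ)) * Real.cos ρ)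
      = ∫ ρ in (-(π/2))..(π/2), GGaux (Real.sin (θ+ρ)) * Real.cos ρ := by
    have h := intervalIntegral.integral_comp_neg
      (f := fun u : ℝ => GGaux (Real.sin (θ+u)) * Real.cos u) (a := -(π/2)) (b := π/2)
    simp only [neg_neg] at h
    rw [← h]
    apply intervalIntegral.integral_congr
    intro x _
    simp [Real.cos_neg, sub_eq_add_neg]
  set ρ0 : ℝ := π/2 - θ with hρ0
  have hb1 : -(π/2) ≤ ρ0 := by rw [hρ0]; linarith
  have hb2 : ρ0 ≤ π/2 := by rw [hρ0]; linarith
  have hadj : (∫ ρ in (-(π/2))..ρ0, GGaux (Real.sin (θ+ρ)) * Real.cos ρ)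
      + (∫ ρ in ρ0..(π/2), GGaux (Real.sin (θ+ρ)) * Real.cos ρ)
      = ∫ ρ in (-(π/2))..(π/2), GGaux (Real.sin (θ+ρ)) * Real.cos ρ :=
    intervalIntegral.integral_add_adjacent_intervals (hcont2.intervalIntegrable _ _)
      (hcont2.intervalIntegrable _ _)
  have hg1cont : Continuous (fun ρ : ℝ =>
      ((θ+ρ)/2 + Real.sin (2*(θ+ρ))/6 - Real.sin (4*(θ+ρ))/24) * Real.cos ρ) := by fun_prop
  have hpiece1 : (∫ ρ in (-(π/2))..ρ0, GGaux (Real.sin (θ+ρ)) * Real.cos ρ)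
      = H1aux θ ρ0 - H1aux θ (-(π/2)) := by
    have e : EqOn (fun ρ : ℝ => GGaux (Real.sin (θ+ρ)) * Real.cos ρ)
        (fun ρ : ℝ => ((θ+ρ)/2 + Real.sin (2*(θ+ρ))/6 - Real.sin (4*(θ+ρ))/24) * Real.cos ρ)
        (uIcc (-(π/2)) ρ0) := by
      intro x hx
      rw [Set.uIcc_of_le (by linarith)] at hx
      have hx1 : -(π/2) ≤ θ + x := by have := hx.1; linarith
      have hx2 : θ + x ≤ π/2 := by have := hx.2; rw [hρ0] at *; linarith
      dsimp only
      rw [Gsin1 (θ+x) hx1 hx2]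
    rw [intervalIntegral.integral_congr e]
    exact intervalIntegral.integral_eq_sub_of_hasDerivAt (fun x _ => H1_deriv θ x)
      (hg1cont.intervalIntegrable _ _)
  have hpiece2 : (∫ ρ in ρ0..(π/2), GGaux (Real.sin (θ+ρ)) * Real.cos ρ)
      = (π/2 * Real.sin (π/2) - H1aux θ (π/2)) - (π/2 * Real.sin ρ0 - H1aux θ ρ0) := by
    have e : EqOn (fun ρ : ℝ => GGaux (Real.sin (θ+ρ)) * Real.cos ρ)
        (fun ρ : ℝ => π/2 * Real.cos ρ
          - ((θ+ρ)/2 + Real.sin (2*(θ+ρ))/6 - Real.sin (4*(θ+ρ))/24) * Real.cos ρ)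
        (uIcc ρ0 (π/2)) := by
      intro x hx
      rw [Set.uIcc_of_le (by linarith)] at hx
      have hx1 : π/2 ≤ θ + x := by have := hx.1; rw [hρ0] at *; linarith
      have hx2 : θ + x ≤ 3*π/2 := by have := hx.2; linarith
      dsimp only
      rw [Gsin2 (θ+x) hx1 hx2]
      ring
    rw [intervalIntegral.integral_congr e]
    exact intervalIntegral.integral_eq_sub_of_hasDerivAt
      (f := fun y => π/2 * Real.sin y - H1aux θ y)
      (fun x _ => ((Real.hasDerivAt_sin x).const_mul (π/2)).sub (H1_deriv θ x))
      (((continuous_const.mul Real.continuous_cos).sub hg1cont).intervalIntegrable _ _)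
  rw [hsplit, hrefl, ← hadj, hpiece1, hpiece2, H1_at_rho0, H1_at_top, H1_at_bot,
    Real.sin_pi_div_two, hρ0, Real.sin_pi_div_two_sub]
  ring

/-- For `θ ∈ [0, π]`,
`(1/(2π)) ∫_{-π/2}^{π/2} [∫₀^{2π} ∫₀^1 r³ 1_{-sin(θ+ρ) ≤ r sin(θ-β) ≤ sin(θ-ρ)} dr dβ] cos ρ dρ
  = 56 sin θ / (45π)`. -/
theorem second_integral_eval (θ : ℝ) (hθ : θ ∈ Set.Icc 0 π) :
    (1 / (2 * π)) * ∫ ρ in (-(π / 2))..(π / 2),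
      (∫ β in (0 : ℝ)..(2 * π), ∫ r in (0 : ℝ)..1,
        r ^ 3 * (if -Real.sin (θ + ρ) ≤ r * Real.sin (θ - β)
                    ∧ r * Real.sin (θ - β) ≤ Real.sin (θ - ρ)
                 then (1 : ℝ) else 0))
        * Real.cos ρ
      = 56 * Real.sin θ / (45 * π) := by
  obtain ⟨h0, hπ⟩ := hθ
  have hpi := Real.pi_pos
  have key : (∫ ρ in (-(π / 2))..(π / 2),
      (∫ β in (0 : ℝ)..(2 * π), ∫ r in (0 : ℝ)..1,
        r ^ 3 * (if -Real.sin (θ + ρ) ≤ r * Real.sin (θ - β)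
                    ∧ r * Real.sin (θ - β) ≤ Real.sin (θ - ρ)
                 then (1 : ℝ) else 0))
        * Real.cos ρ) = 112 * Real.sin θ / 45 := by
    rw [← outer_int θ h0 hπ]
    apply intervalIntegral.integral_congr
    intro ρ hρ
    rw [Set.uIcc_of_le (by linarith)] at hρ
    dsimp only
    congr 1
    have hsθ : 0 ≤ Real.sin θ := Real.sin_nonneg_of_nonneg_of_le_pi h0 hπ
    have hcρ : 0 ≤ Real.cos ρ := Real.cos_nonneg_of_mem_Icc ⟨hρ.1, hρ.2⟩
    have hAB : -Real.sin (θ+ρ) ≤ Real.sin (θ-ρ) := by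
      have hs : Real.sin (θ-ρ) + Real.sin (θ+ρ) = 2*Real.sin θ*Real.cos ρ := by
        rw [Real.sin_add, Real.sin_sub]; ring
      nlinarith [mul_nonneg hsθ hcρ]
    exact double_eval θ (Real.sin (θ-ρ)) (Real.sin (θ+ρ)) (Real.neg_one_le_sin _)
      (Real.sin_le_one _) (Real.neg_one_le_sin _) (Real.sin_le_one _) hAB
  rw [key]
  field_simp
  ring
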